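/- arXiv:1903.02743 — 2 statements merged into one kernel-verified Lean document; each statement's English description precedes it below -/
import Mathlib

section
/- Let u, u' ∈ L²(ℝ) ∩ L∞(ℝ) with u' locally absolutely continuous and -h²u''+Vu ∈ L²(ℝ) for V ∈ L¹(ℝ). Let w : ℝ → [-1,1] with w' ∈ L¹(ℝ). If F(x) = |h u'(x)|² + E|u(x)|², then wF and (wF)' are both in L¹(ℝ), and consequently ∫_ℝ (wF)'(x) dx = 0. -/
open MeasureTheory Complex Set Filter intervalIntegral

lemma fubini_tri {𝕜 : Type*} [RCLike 𝕜] {a b : ℝ} (hab : a ≤ b) (f' g' : ℝ → 𝕜)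
    (hf' : IntegrableOn f' (Ioc a b) volume) (hg' : IntegrableOn g' (Ioc a b) volume) :
    (∫ t in a..b, f' t * ∫ s in a..t, g' s) + (∫ t in a..b, (∫ s in a..t, f' s) * g' t)
      = (∫ t in a..b, f' t) * (∫ s in a..b, g' s) := by
  set μ := volume.restrict (Ioc a b) with hμ
  have hK : Integrable (fun p : ℝ × ℝ => f' p.1 * g' p.2) (μ.prod μ) :=
    hf'.mul_prod hg'
  have hA : MeasurableSet {p : ℝ × ℝ | p.2 ≤ p.1} :=
    measurableSet_le measurable_snd measurable_fst
  have key : (∫ p in {p : ℝ × ℝ | p.2 ≤ p.1}, f' p.1 * g' p.2 ∂(μ.prod μ))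
      + (∫ p in {p : ℝ × ℝ | p.2 ≤ p.1}ᶜ, f' p.1 * g' p.2 ∂(μ.prod μ))
      = (∫ t in a..b, f' t) * (∫ s in a..b, g' s) := by
    rw [integral_add_compl hA hK, MeasureTheory.integral_prod_mul,
      intervalIntegral.integral_of_le hab, intervalIntegral.integral_of_le hab]
  rw [← key]
  congr 1
  · -- lower triangle
    rw [← MeasureTheory.integral_indicator hA,
      MeasureTheory.integral_prod _ (hK.indicator hA),
      intervalIntegral.integral_of_le hab]
    apply MeasureTheory.setIntegral_congr_fun measurableSet_Ioc
    intro t ht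
    have : (fun s => ({p : ℝ × ℝ | p.2 ≤ p.1}).indicator
        (fun p : ℝ × ℝ => f' p.1 * g' p.2) (t, s))
        = (Iic t).indicator (fun s => f' t * g' s) := by
      funext s
      by_cases hs : s ≤ t <;> simp [Set.indicator, hs]
    dsimp only
    rw [this, MeasureTheory.integral_indicator measurableSet_Iic, hμ,
      Measure.restrict_restrict measurableSet_Iic,
      Set.Iic_inter_Ioc_of_le ht.2, MeasureTheory.integral_const_mul,
      intervalIntegral.integral_of_le ht.1.le]
  · -- upper triangle
    rw [← MeasureTheory.integral_indicator hA.compl,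
      MeasureTheory.integral_prod_symm _ (hK.indicator hA.compl),
      intervalIntegral.integral_of_le hab]
    apply MeasureTheory.setIntegral_congr_fun measurableSet_Ioc
    intro s hs
    have : (fun t => ({p : ℝ × ℝ | p.2 ≤ p.1}ᶜ).indicator
        (fun p : ℝ × ℝ => f' p.1 * g' p.2) (t, s))
        = (Iio s).indicator (fun t => f' t * g' s) := by
      funext t
      by_cases hts : t < s <;> simp [Set.indicator, hts, not_le, not_lt.mpr]
    dsimp only
    rw [this, MeasureTheory.integral_indicator measurableSet_Iio, hμ,
      Measure.restrict_restrict measurableSet_Iio, MeasureTheory.integral_mul_const,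
      intervalIntegral.integral_of_le hs.1.le]
    congr 1
    have hset : Iio s ∩ Ioc a b = Ioo a s := by
      ext x
      simp only [mem_inter_iff, mem_Iio, mem_Ioc, mem_Ioo]
      constructor
      · rintro ⟨h1, h2, _⟩; exact ⟨h2, h1⟩
      · rintro ⟨h1, h2⟩; exact ⟨h2, h1, h2.le.trans hs.2⟩
    rw [hset, ← MeasureTheory.integral_Ioc_eq_integral_Ioo]

lemma ac_mul {𝕜 : Type*} [RCLike 𝕜] {a b : ℝ} (hab : a ≤ b) (f g f' g' : ℝ → 𝕜)
    (hf' : ∀ c d : ℝ, IntervalIntegrable f' volume c d)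
    (hg' : ∀ c d : ℝ, IntervalIntegrable g' volume c d)
    (hf : ∀ x, f x = f a + ∫ t in a..x, f' t) (hg : ∀ x, g x = g a + ∫ t in a..x, g' t) :
    f b * g b - f a * g a = ∫ t in a..b, (f' t * g t + f t * g' t) := by
  have hFc : Continuous fun x => ∫ t in a..x, f' t :=
    intervalIntegral.continuous_primitive hf' a
  have hGc : Continuous fun x => ∫ t in a..x, g' t :=
    intervalIntegral.continuous_primitive hg' a
  have i1 : IntervalIntegrable (fun t => f' t * g a) volume a b :=
    (hf' a b).mul_const _
  have i2 : IntervalIntegrable (fun t => f' t * ∫ s in a..t, g' s) volume a b :=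
    (hf' a b).mul_continuousOn hGc.continuousOn
  have i3 : IntervalIntegrable (fun t => f a * g' t) volume a b :=
    (hg' a b).const_mul _
  have i4 : IntervalIntegrable (fun t => (∫ s in a..t, f' s) * g' t) volume a b :=
    (hg' a b).continuousOn_mul hFc.continuousOn
  have step : (∫ t in a..b, (f' t * g t + f t * g' t))
      = (∫ t in a..b, f' t * g a) + ((∫ t in a..b, f' t * ∫ s in a..t, g' s)
        + ((∫ t in a..b, f a * g' t) + ∫ t in a..b, (∫ s in a..t, f' s) * g' t)) := by
    rw [← intervalIntegral.integral_add i3 i4, ← intervalIntegral.integral_add i2 (i3.add i4),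
      ← intervalIntegral.integral_add i1 (i2.add (i3.add i4))]
    apply intervalIntegral.integral_congr
    intro t _
    dsimp only
    rw [hf t, hg t]; ring
  have tri := fubini_tri hab f' g' (hf' a b).1 (hg' a b).1
  rw [step, intervalIntegral.integral_mul_const, intervalIntegral.integral_const_mul]
  have hfb : (∫ t in a..b, f' t) = f b - f a := by rw [hf b]; ring
  have hgb : (∫ t in a..b, g' t) = g b - g a := by rw [hg b]; ring
  rw [hfb, hgb] at tri ⊢
  linear_combination -tri

lemma ac_mul' {𝕜 : Type*} [RCLike 𝕜] (f g f' g' : ℝ → 𝕜)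
    (hf' : ∀ c d : ℝ, IntervalIntegrable f' volume c d)
    (hg' : ∀ c d : ℝ, IntervalIntegrable g' volume c d)
    (hf : ∀ x, f x = f 0 + ∫ t in (0:ℝ)..x, f' t)
    (hg : ∀ x, g x = g 0 + ∫ t in (0:ℝ)..x, g' t) (x : ℝ) :
    f x * g x = f 0 * g 0 + ∫ t in (0:ℝ)..x, (f' t * g t + f t * g' t) := by
  rcases le_total 0 x with hx | hx
  · have := ac_mul hx f g f' g' hf' hg' hf hg
    linear_combination this
  · have hfx : ∀ y, f y = f x + ∫ t in x..y, f' t := by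
      intro y
      rw [hf y, hf x, add_assoc,
        intervalIntegral.integral_add_adjacent_intervals (hf' 0 x) (hf' x y)]
    have hgx : ∀ y, g y = g x + ∫ t in x..y, g' t := by
      intro y
      rw [hg y, hg x, add_assoc,
        intervalIntegral.integral_add_adjacent_intervals (hg' 0 x) (hg' x y)]
    have := ac_mul hx f g f' g' hf' hg' hfx hgx
    linear_combination -this
      - intervalIntegral.integral_symm (f := fun t => f' t * g t + f t * g' t)
        (μ := volume) x 0

lemma limit_zero_atTop {g : ℝ → ℝ} (hg : Integrable g volume) {l : ℝ}
    (h : Filter.Tendsto g atTop (nhds l)) : l = 0 := by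
  by_contra hl
  have h2 : ∀ᶠ x in atTop, ‖l‖ / 2 ≤ ‖g x‖ :=
    (h.norm).eventually (eventually_ge_nhds (half_lt_self (norm_pos_iff.mpr hl)))
  obtain ⟨M, hM⟩ := eventually_atTop.mp h2
  have hc : Integrable (fun _ : ℝ => ‖l‖ / 2) (volume.restrict (Ioi M)) := by
    refine Integrable.mono' (hg.norm.integrableOn) aestronglyMeasurable_const ?_
    refine (ae_restrict_iff' measurableSet_Ioi).2 (Filter.Eventually.of_forall fun x hx => ?_)
    rw [Real.norm_of_nonneg (by positivity)]
    exact hM x hx.le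
  rw [integrable_const_iff] at hc
  rcases hc with hc | hc
  · exact hl (norm_eq_zero.mp (by linarith [div_eq_zero_iff.mp hc,
      (norm_nonneg l)] : ‖l‖ = 0))
  · have hc := measure_lt_top (volume.restrict (Ioi M)) univ
    rw [Measure.restrict_apply_univ, Real.volume_Ioi] at hc
    exact (lt_irrefl _ hc).elim

lemma limit_zero_atBot {g : ℝ → ℝ} (hg : Integrable g volume) {l : ℝ}
    (h : Filter.Tendsto g atBot (nhds l)) : l = 0 := by
  by_contra hl
  have h2 : ∀ᶠ x in atBot, ‖l‖ / 2 ≤ ‖g x‖ :=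
    (h.norm).eventually (eventually_ge_nhds (half_lt_self (norm_pos_iff.mpr hl)))
  obtain ⟨M, hM⟩ := eventually_atBot.mp h2
  have hc : Integrable (fun _ : ℝ => ‖l‖ / 2) (volume.restrict (Iio M)) := by
    refine Integrable.mono' (hg.norm.integrableOn) aestronglyMeasurable_const ?_
    refine (ae_restrict_iff' measurableSet_Iio).2 (Filter.Eventually.of_forall fun x hx => ?_)
    rw [Real.norm_of_nonneg (by positivity)]
    exact hM x hx.le
  rw [integrable_const_iff] at hc
  rcases hc with hc | hc
  · exact hl (norm_eq_zero.mp (by linarith [div_eq_zero_iff.mp hc,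
      (norm_nonneg l)] : ‖l‖ = 0))
  · have hc := measure_lt_top (volume.restrict (Iio M)) univ
    rw [Measure.restrict_apply_univ, Real.volume_Iio] at hc
    exact (lt_irrefl _ hc).elim

lemma ae_bound_of_memtop {f : ℝ → ℂ} (hf : MeasureTheory.MemLp f ⊤ volume) :
    ∀ᵐ x ∂(volume : Measure ℝ), ‖f x‖ ≤ (eLpNormEssSup f volume).toReal := by
  have hfin : eLpNormEssSup f volume ≠ ⊤ := by
    have h2 := hf.2
    rw [eLpNorm_exponent_top, lt_top_iff_ne_top] at h2
    exact h2
  filter_upwards [ae_le_eLpNormEssSup (f := f) (μ := volume)] with x hx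
  have h3 := ENNReal.toReal_mono hfin hx
  simpa using h3

lemma intervalIntegral_conj {f : ℝ → ℂ} {a b : ℝ} :
    (∫ t in a..b, (starRingEnd ℂ) (f t)) = (starRingEnd ℂ) (∫ t in a..b, f t) := by
  rw [intervalIntegral, intervalIntegral, integral_conj, integral_conj, map_sub]

lemma MeasureTheory.Integrable.conj' {α : Type*} [MeasurableSpace α] {μ : Measure α} {f : α → ℂ}
    (hf : Integrable f μ) : Integrable (fun x => (starRingEnd ℂ) (f x)) μ :=
  hf.norm.mono' (continuous_star.comp_aestronglyMeasurable hf.1)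
    (Filter.Eventually.of_forall fun x => by simp)

lemma IntervalIntegrable.conj' {f : ℝ → ℂ} {a b : ℝ}
    (hf : IntervalIntegrable f volume a b) :
    IntervalIntegrable (fun t => (starRingEnd ℂ) (f t)) volume a b :=
  ⟨hf.1.conj', hf.2.conj'⟩

lemma intervalIntegral_re {f : ℝ → ℂ} {a b : ℝ} (hf : IntervalIntegrable f volume a b) :
    (∫ t in a..b, (f t).re) = (∫ t in a..b, f t).re := by
  rw [intervalIntegral, intervalIntegral]
  have h1 := integral_re (𝕜 := ℂ) hf.1
  have h2 := integral_re (𝕜 := ℂ) hf.2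
  simp only [RCLike.re_to_complex] at h1 h2
  rw [h1, h2, Complex.sub_re]

lemma re_mul_conj_comm (z w : ℂ) : (z * (starRingEnd ℂ) w).re = (w * (starRingEnd ℂ) z).re := by
  have : w * (starRingEnd ℂ) z = (starRingEnd ℂ) (z * (starRingEnd ℂ) w) := by
    rw [map_mul, Complex.conj_conj, mul_comm]
  rw [this, Complex.conj_re]

lemma re_mul_conj_self (z : ℂ) : (z * (starRingEnd ℂ) z).re = ‖z‖ ^ 2 := by
  rw [Complex.mul_conj]
  simp [Complex.normSq_eq_norm_sq, ← Complex.ofReal_pow]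

lemma normsq_rep (v v' : ℝ → ℂ) (hv'ii : ∀ a b : ℝ, IntervalIntegrable v' volume a b)
    (hvcont : Continuous v)
    (hvAC : ∀ x, v x = v 0 + ∫ t in (0:ℝ)..x, v' t) (x : ℝ) :
    ‖v x‖ ^ 2 = ‖v 0‖ ^ 2 + ∫ t in (0:ℝ)..x, 2 * (v t * (starRingEnd ℂ) (v' t)).re := by
  have hcvAC : ∀ y, (starRingEnd ℂ) (v y)
      = (starRingEnd ℂ) (v 0) + ∫ t in (0:ℝ)..y, (starRingEnd ℂ) (v' t) := by
    intro y
    rw [intervalIntegral_conj, ← map_add]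
    exact congrArg _ (hvAC y)
  have hvii : ∀ a b : ℝ, IntervalIntegrable v volume a b := fun a b =>
    hvcont.intervalIntegrable _ _
  have hc := ac_mul' v (fun t => (starRingEnd ℂ) (v t)) v' (fun t => (starRingEnd ℂ) (v' t))
    hv'ii (fun a b => (hv'ii a b).conj') hvAC hcvAC x
  have hdii : IntervalIntegrable
      (fun t => v' t * (starRingEnd ℂ) (v t) + v t * (starRingEnd ℂ) (v' t)) volume 0 x :=
    ((hv'ii 0 x).mul_continuousOn (continuous_star.comp hvcont).continuousOn).add
      ((hv'ii 0 x).conj'.continuousOn_mul hvcont.continuousOn)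
  have hre := congrArg Complex.re hc
  rw [Complex.add_re, ← _root_.intervalIntegral_re hdii] at hre
  rw [← re_mul_conj_self, ← re_mul_conj_self, hre]
  congr 1
  apply intervalIntegral.integral_congr
  intro t _
  simp only [Complex.add_re]
  rw [re_mul_conj_comm (v' t) (v t)]
  ring


/-- If `u, u' ∈ L² ∩ L∞`, `u'` is locally absolutely continuous with
`-h²u'' + Vu ∈ L²` for `V ∈ L¹`, and `w : ℝ → [-1,1]` has `w' ∈ L¹`, then
`wF` and `(wF)'` are in `L¹`, and `∫ (wF)' = 0`, where
`F(x) = |hu'(x)|² + E|u(x)|²` and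
`(wF)' = w' F + w (2h² Re(u'' ū') + 2E Re(u ū'))`. -/
theorem stmt_5 (V : ℝ → ℝ) (hV : Integrable V volume) (h E : ℝ)
    (hh : 0 < h) (hE : 0 < E) (u u' u'' : ℝ → ℂ)
    (hu : ∀ x, HasDerivAt u (u' x) x)
    (hu'' : ∀ a b : ℝ, IntervalIntegrable u'' volume a b)
    (hAC : ∀ x, u' x = u' 0 + ∫ t in (0:ℝ)..x, u'' t)
    (huL2 : MemLp u 2 volume) (huLinf : MemLp u ⊤ volume)
    (hu'L2 : MemLp u' 2 volume) (hu'Linf : MemLp u' ⊤ volume)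
    (hPu : MemLp (fun x => -(h : ℂ) ^ 2 * u'' x + (V x : ℂ) * u x) 2 volume)
    (w w' : ℝ → ℝ) (hw : ∀ x, w x ∈ Set.Icc (-1 : ℝ) 1)
    (hw' : Integrable w' volume)
    (hwAC : ∀ x, w x = w 0 + ∫ t in (0:ℝ)..x, w' t) :
    Integrable (fun x => w x * (h ^ 2 * ‖u' x‖ ^ 2 + E * ‖u x‖ ^ 2)) volume ∧
    Integrable (fun x => w' x * (h ^ 2 * ‖u' x‖ ^ 2 + E * ‖u x‖ ^ 2)
        + w x * (2 * h ^ 2 * (u'' x * (starRingEnd ℂ) (u' x)).re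
          + 2 * E * (u x * (starRingEnd ℂ) (u' x)).re)) volume ∧
    (∫ x, (w' x * (h ^ 2 * ‖u' x‖ ^ 2 + E * ‖u x‖ ^ 2)
        + w x * (2 * h ^ 2 * (u'' x * (starRingEnd ℂ) (u' x)).re
          + 2 * E * (u x * (starRingEnd ℂ) (u' x)).re))) = 0 := by
  set F : ℝ → ℝ := fun x => h ^ 2 * ‖u' x‖ ^ 2 + E * ‖u x‖ ^ 2 with hFdef
  set Fd : ℝ → ℝ := fun x => 2 * h ^ 2 * (u'' x * (starRingEnd ℂ) (u' x)).re
      + 2 * E * (u x * (starRingEnd ℂ) (u' x)).re with hFddef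
  set Pu : ℝ → ℂ := fun x => -(h : ℂ) ^ 2 * u'' x + (V x : ℂ) * u x with hPudef
  -- continuity facts
  have hucont : Continuous u := continuous_iff_continuousAt.mpr fun x => (hu x).continuousAt
  have hu'cont : Continuous u' :=
    (continuous_const.add (intervalIntegral.continuous_primitive hu'' 0)).congr
      fun x => (hAC x).symm
  have hwcont : Continuous w :=
    (continuous_const.add (intervalIntegral.continuous_primitive
      (fun _ _ => hw'.intervalIntegrable) 0)).congr fun x => (hwAC x).symm
  have hu'ii : ∀ a b : ℝ, IntervalIntegrable u' volume a b := fun a b =>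
    hu'cont.intervalIntegrable a b
  have huAC : ∀ x, u x = u 0 + ∫ t in (0:ℝ)..x, u' t := by
    intro x
    have hfa := intervalIntegral.integral_eq_sub_of_hasDerivAt (a := 0) (b := x)
      (fun t _ => hu t) (hu'ii 0 x)
    linear_combination -hfa
  -- representations of the norms squared
  have rep1 : ∀ x, ‖u' x‖ ^ 2 = ‖u' 0‖ ^ 2
      + ∫ t in (0:ℝ)..x, 2 * (u'' t * (starRingEnd ℂ) (u' t)).re := by
    intro x
    rw [normsq_rep u' u'' hu'' hu'cont hAC x]
    congr 1
    apply intervalIntegral.integral_congr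
    intro t _
    dsimp only
    rw [re_mul_conj_comm (u' t) (u'' t)]
  have rep2 : ∀ x, ‖u x‖ ^ 2 = ‖u 0‖ ^ 2
      + ∫ t in (0:ℝ)..x, 2 * (u t * (starRingEnd ℂ) (u' t)).re :=
    normsq_rep u u' hu'ii hucont huAC
  -- interval integrability of the densities
  have hAii : ∀ a b : ℝ, IntervalIntegrable
      (fun t => (u'' t * (starRingEnd ℂ) (u' t)).re) volume a b := by
    intro a b
    have h1 : IntervalIntegrable (fun t => u'' t * (starRingEnd ℂ) (u' t)) volume a b :=
      (hu'' a b).mul_continuousOn (continuous_star.comp hu'cont).continuousOn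
    exact ⟨h1.1.re, h1.2.re⟩
  have hBcont : Continuous (fun t => (u t * (starRingEnd ℂ) (u' t)).re) :=
    Complex.continuous_re.comp (hucont.mul (continuous_star.comp hu'cont))
  have hBii : ∀ a b : ℝ, IntervalIntegrable
      (fun t => (u t * (starRingEnd ℂ) (u' t)).re) volume a b := fun a b =>
    hBcont.intervalIntegrable a b
  have hFdii : ∀ a b : ℝ, IntervalIntegrable Fd volume a b := fun a b =>
    ((hAii a b).const_mul (2 * h ^ 2)).add ((hBii a b).const_mul (2 * E))
  have hFrep : ∀ x, F x = F 0 + ∫ t in (0:ℝ)..x, Fd t := by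
    intro x
    have e1 := rep1 x
    have e2 := rep2 x
    have e3 : (∫ t in (0:ℝ)..x, Fd t)
        = h ^ 2 * (∫ t in (0:ℝ)..x, 2 * (u'' t * (starRingEnd ℂ) (u' t)).re)
          + E * (∫ t in (0:ℝ)..x, 2 * (u t * (starRingEnd ℂ) (u' t)).re) := by
      rw [← intervalIntegral.integral_const_mul, ← intervalIntegral.integral_const_mul,
        ← intervalIntegral.integral_add (((hAii 0 x).const_mul 2).const_mul (h ^ 2))
          (((hBii 0 x).const_mul 2).const_mul E)]
      apply intervalIntegral.integral_congr
      intro t _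
      dsimp only
      simp only [hFddef]
      ring
    simp only [hFdef]
    rw [e3]
    linear_combination h ^ 2 * e1 + E * e2
  -- product rule for w * F
  have hGrep : ∀ x, w x * F x = w 0 * F 0 + ∫ t in (0:ℝ)..x, (w' t * F t + w t * Fd t) :=
    fun x => ac_mul' (𝕜 := ℝ) w F w' Fd (fun _ _ => hw'.intervalIntegrable)
      hFdii hwAC hFrep x
  -- basic integrability
  have hIu2 : Integrable (fun x => ‖u x‖ ^ 2) volume := by
    have h2 := huL2.integrable_norm_rpow two_ne_zero ENNReal.ofNat_ne_top
    refine h2.congr (Filter.Eventually.of_forall fun x => ?_)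
    rw [show ((2:ENNReal)).toReal = ((2:ℕ):ℝ) by simp]
    exact Real.rpow_natCast _ 2
  have hIu'2 : Integrable (fun x => ‖u' x‖ ^ 2) volume := by
    have h2 := hu'L2.integrable_norm_rpow two_ne_zero ENNReal.ofNat_ne_top
    refine h2.congr (Filter.Eventually.of_forall fun x => ?_)
    rw [show ((2:ENNReal)).toReal = ((2:ℕ):ℝ) by simp]
    exact Real.rpow_natCast _ 2
  have h12 : (1:ENNReal)/1 = 1/2 + 1/2 := by
    simp [ENNReal.inv_two_add_inv_two]
  have hprod : Integrable (fun x => ‖u x‖ * ‖u' x‖) volume := by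
    have hm := MeasureTheory.MemLp.smul (r := 1) (q := 2) (p := 2)
      hu'L2.norm huL2.norm (hpqr := ⟨by simp [ENNReal.inv_two_add_inv_two]⟩)
    have := memLp_one_iff_integrable.mp hm
    exact this
  have hPprod : Integrable (fun x => ‖Pu x‖ * ‖u' x‖) volume := by
    have hm := MeasureTheory.MemLp.smul (r := 1) (q := 2) (p := 2)
      hu'L2.norm hPu.norm (hpqr := ⟨by simp [ENNReal.inv_two_add_inv_two]⟩)
    have := memLp_one_iff_integrable.mp hm
    exact this
  -- essential sup bounds
  have hbu := ae_bound_of_memtop huLinf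
  have hbu' := ae_bound_of_memtop hu'Linf
  set Cu : ℝ := (eLpNormEssSup u volume).toReal with hCu
  set Cu' : ℝ := (eLpNormEssSup u' volume).toReal with hCu'
  have hCu0 : 0 ≤ Cu := ENNReal.toReal_nonneg
  have hCu'0 : 0 ≤ Cu' := ENNReal.toReal_nonneg
  -- F facts
  have hFcont : Continuous F :=
    ((continuous_const.mul ((hu'cont.norm).pow 2)).add
      (continuous_const.mul ((hucont.norm).pow 2)))
  have hFint : Integrable F volume := (hIu'2.const_mul _).add (hIu2.const_mul _)
  have hFnonneg : ∀ x, 0 ≤ F x := fun x => by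
    simp only [hFdef]; positivity
  have hwle : ∀ x, |w x| ≤ 1 := fun x => abs_le.mpr ⟨(hw x).1, (hw x).2⟩
  -- Claim 1
  have hGint : Integrable (fun x => w x * F x) volume := by
    refine hFint.mono' (hwcont.mul hFcont).aestronglyMeasurable
      (Filter.Eventually.of_forall fun x => ?_)
    calc ‖w x * F x‖ = |w x| * F x := by
          rw [Real.norm_eq_abs, abs_mul, _root_.abs_of_nonneg (hFnonneg x)]
      _ ≤ 1 * F x := mul_le_mul_of_nonneg_right (hwle x) (hFnonneg x)
      _ = F x := one_mul _
  -- Claim 2 pieces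
  have hD1 : Integrable (fun x => w' x * F x) volume := by
    refine (hw'.norm.mul_const (h ^ 2 * Cu' ^ 2 + E * Cu ^ 2)).mono'
      (hw'.1.mul hFcont.aestronglyMeasurable) ?_
    filter_upwards [hbu, hbu'] with x h1 h2
    have hFle : F x ≤ h ^ 2 * Cu' ^ 2 + E * Cu ^ 2 := by
      simp only [hFdef]
      have b1 : ‖u' x‖ ^ 2 ≤ Cu' ^ 2 := pow_le_pow_left₀ (norm_nonneg _) h2 2
      have b2 : ‖u x‖ ^ 2 ≤ Cu ^ 2 := pow_le_pow_left₀ (norm_nonneg _) h1 2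
      nlinarith [sq_nonneg h, hE.le]
    calc ‖w' x * F x‖ = ‖w' x‖ * F x := by
          rw [Real.norm_eq_abs, Real.norm_eq_abs, abs_mul, _root_.abs_of_nonneg (hFnonneg x)]
      _ ≤ ‖w' x‖ * (h ^ 2 * Cu' ^ 2 + E * Cu ^ 2) :=
          mul_le_mul_of_nonneg_left hFle (norm_nonneg _)
  have hD2 : Integrable (fun x => w x * (2 * E * (u x * (starRingEnd ℂ) (u' x)).re)) volume := by
    refine (hprod.const_mul (2 * E)).mono'
      ((hwcont.mul (continuous_const.mul hBcont)).aestronglyMeasurable)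
      (Filter.Eventually.of_forall fun x => ?_)
    have hre : |(u x * (starRingEnd ℂ) (u' x)).re| ≤ ‖u x‖ * ‖u' x‖ := by
      calc |(u x * (starRingEnd ℂ) (u' x)).re| ≤ ‖u x * (starRingEnd ℂ) (u' x)‖ := by
            exact Complex.abs_re_le_norm _
        _ = ‖u x‖ * ‖u' x‖ := by rw [norm_mul, RCLike.norm_conj]
    calc ‖w x * (2 * E * (u x * (starRingEnd ℂ) (u' x)).re)‖
        = |w x| * (2 * E * |(u x * (starRingEnd ℂ) (u' x)).re|) := by
          rw [Real.norm_eq_abs, abs_mul, abs_mul, abs_mul]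
          simp [_root_.abs_of_nonneg hE.le]
      _ ≤ 1 * (2 * E * (‖u x‖ * ‖u' x‖)) := by
          apply mul_le_mul (hwle x) (by nlinarith [hE.le]) (by positivity) zero_le_one
      _ = 2 * E * (‖u x‖ * ‖u' x‖) := one_mul _
  have hu''m : AEStronglyMeasurable u'' volume := by
    have hhne : ((h : ℂ)) ^ 2 ≠ 0 := by
      simp only [ne_eq, pow_eq_zero_iff, Complex.ofReal_eq_zero, OfNat.ofNat_ne_zero,
        not_false_eq_true, and_true]
      exact hh.ne'
    have heq : u'' = fun x => ((h : ℂ) ^ 2)⁻¹ * ((V x : ℂ) * u x - Pu x) := by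
      funext x
      rw [eq_inv_mul_iff_mul_eq₀ hhne]
      simp only [hPudef]
      ring
    rw [heq]
    exact (((Complex.continuous_ofReal.comp_aestronglyMeasurable hV.1).mul
      hucont.aestronglyMeasurable).sub hPu.1).const_mul _
  have hD3 : Integrable
      (fun x => w x * (2 * h ^ 2 * (u'' x * (starRingEnd ℂ) (u' x)).re)) volume := by
    have hkey : ∀ x, (h:ℝ) ^ 2 * (u'' x * (starRingEnd ℂ) (u' x)).re
        = (((V x : ℂ) * u x - Pu x) * (starRingEnd ℂ) (u' x)).re := by
      intro x
      have h1 : ((V x : ℂ) * u x - Pu x) * (starRingEnd ℂ) (u' x)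
          = ((h ^ 2 : ℝ) : ℂ) * (u'' x * (starRingEnd ℂ) (u' x)) := by
        simp only [hPudef]
        push_cast
        ring
      rw [h1, Complex.re_ofReal_mul]
    refine ((hV.norm.const_mul (2 * (Cu * Cu'))).add (hPprod.const_mul 2)).mono'
      (hwcont.aestronglyMeasurable.mul
        ((Complex.continuous_re.comp_aestronglyMeasurable
          (hu''m.mul ((continuous_star.comp hu'cont).aestronglyMeasurable))).const_mul
          (2 * h ^ 2))) ?_
    filter_upwards [hbu, hbu'] with x h1 h2
    have e1 : |(((V x : ℂ) * u x - Pu x) * (starRingEnd ℂ) (u' x)).re|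
        ≤ (|V x| * ‖u x‖ + ‖Pu x‖) * ‖u' x‖ := by
      calc |(((V x : ℂ) * u x - Pu x) * (starRingEnd ℂ) (u' x)).re|
          ≤ ‖((V x : ℂ) * u x - Pu x) * (starRingEnd ℂ) (u' x)‖ := by
            exact Complex.abs_re_le_norm _
        _ = ‖(V x : ℂ) * u x - Pu x‖ * ‖u' x‖ := by rw [norm_mul, RCLike.norm_conj]
        _ ≤ (|V x| * ‖u x‖ + ‖Pu x‖) * ‖u' x‖ := by
            apply mul_le_mul_of_nonneg_right _ (norm_nonneg _)
            calc ‖(V x : ℂ) * u x - Pu x‖ ≤ ‖(V x : ℂ) * u x‖ + ‖Pu x‖ := norm_sub_le _ _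
              _ = |V x| * ‖u x‖ + ‖Pu x‖ := by rw [norm_mul, Complex.norm_real,
                  Real.norm_eq_abs]
    calc ‖w x * (2 * h ^ 2 * (u'' x * (starRingEnd ℂ) (u' x)).re)‖
        = |w x| * (2 * |(h:ℝ) ^ 2 * (u'' x * (starRingEnd ℂ) (u' x)).re|) := by
          rw [Real.norm_eq_abs, abs_mul]
          congr 1
          rw [show (2:ℝ) * h ^ 2 * (u'' x * (starRingEnd ℂ) (u' x)).re
            = 2 * (h ^ 2 * (u'' x * (starRingEnd ℂ) (u' x)).re) by ring, abs_mul]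
          simp
      _ ≤ 1 * (2 * |(h:ℝ) ^ 2 * (u'' x * (starRingEnd ℂ) (u' x)).re|) := by
          apply mul_le_mul_of_nonneg_right (hwle x) (by positivity)
      _ = 2 * |(((V x : ℂ) * u x - Pu x) * (starRingEnd ℂ) (u' x)).re| := by
          rw [one_mul, hkey x]
      _ ≤ 2 * ((|V x| * ‖u x‖ + ‖Pu x‖) * ‖u' x‖) :=
          mul_le_mul_of_nonneg_left e1 (by norm_num)
      _ ≤ 2 * (Cu * Cu') * |V x| + 2 * (‖Pu x‖ * ‖u' x‖) := by
          have hmm : ‖u x‖ * ‖u' x‖ ≤ Cu * Cu' :=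
            mul_le_mul h1 h2 (norm_nonneg _) hCu0
          nlinarith [abs_nonneg (V x), norm_nonneg (Pu x), norm_nonneg (u' x),
            norm_nonneg (u x)]
      _ = 2 * (Cu * Cu') * ‖V x‖ + 2 * (‖Pu x‖ * ‖u' x‖) := by
          rw [Real.norm_eq_abs]
  -- assemble claim 2
  have hDint : Integrable (fun x => w' x * F x + w x * Fd x) volume := by
    refine (hD1.add (hD3.add hD2)).congr (Filter.Eventually.of_forall fun x => ?_)
    simp only [Pi.add_apply, hFdef, hFddef]
    ring
  refine ⟨hGint, hDint, ?_⟩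
  -- Claim 3 : the integral vanishes
  have t1 : Filter.Tendsto (fun b => ∫ t in (0:ℝ)..b, (w' t * F t + w t * Fd t))
      Filter.atTop (nhds (∫ t in Ioi (0:ℝ), (w' t * F t + w t * Fd t))) :=
    MeasureTheory.intervalIntegral_tendsto_integral_Ioi 0 hDint.integrableOn
      Filter.tendsto_id
  have tG : Filter.Tendsto (fun x => w x * F x) Filter.atTop
      (nhds (w 0 * F 0 + ∫ t in Ioi (0:ℝ), (w' t * F t + w t * Fd t))) :=
    (Filter.Tendsto.add tendsto_const_nhds t1).congr fun b => (hGrep b).symm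
  have hL1 : w 0 * F 0 + (∫ t in Ioi (0:ℝ), (w' t * F t + w t * Fd t)) = 0 :=
    limit_zero_atTop hGint tG
  have t2 : Filter.Tendsto (fun a => ∫ t in a..(0:ℝ), (w' t * F t + w t * Fd t))
      Filter.atBot (nhds (∫ t in Iic (0:ℝ), (w' t * F t + w t * Fd t))) :=
    MeasureTheory.intervalIntegral_tendsto_integral_Iic 0 hDint.integrableOn
      Filter.tendsto_id
  have tG' : Filter.Tendsto (fun x => w x * F x) Filter.atBot
      (nhds (w 0 * F 0 - ∫ t in Iic (0:ℝ), (w' t * F t + w t * Fd t))) := by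
    refine (Filter.Tendsto.sub tendsto_const_nhds t2).congr fun a => ?_
    rw [hGrep a, intervalIntegral.integral_symm]
    ring
  have hL2 : w 0 * F 0 - (∫ t in Iic (0:ℝ), (w' t * F t + w t * Fd t)) = 0 :=
    limit_zero_atBot hGint tG'
  have hsplit : (∫ x, (w' x * F x + w x * Fd x))
      = (∫ t in Iic (0:ℝ), (w' t * F t + w t * Fd t))
        + (∫ t in Ioi (0:ℝ), (w' t * F t + w t * Fd t)) := by
    rw [← intervalIntegral.integral_Iic_add_Ioi hDint.integrableOn hDint.integrableOn]
  rw [hsplit]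
  linarith [hL1, hL2]
end

section
/- Let m ∈ L¹(ℝ) be nonnegative, k, h > 0, and choose a ∈ ℝ with ∫_a^∞ m = ∫_{-∞}^a m. Define w(x) = 2 exp( -(k/(2h)) ∫_ℝ m ) sinh( (k/h) ∫_a^x m ). Then |w(x)| ≤ 1 for all x, and w'(x) ≥ (2k/h) exp( -(k/(2h)) ∫_ℝ m ) m(x) for a.e. x. -/
open MeasureTheory Filter Set

/-- Lebesgue differentiation: a.e. derivative of the indefinite integral. -/
lemma aux_ae_hasDerivAt_intervalIntegral (m : ℝ → ℝ) (hm : Integrable m volume) (a : ℝ) :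
    ∀ᵐ x ∂volume, HasDerivAt (fun y => ∫ t in a..y, m t) (m x) x := by
  filter_upwards [IsUnifLocDoublingMeasure.ae_tendsto_average (volume : Measure ℝ)
    hm.locallyIntegrable 1] with x hx
  rw [hasDerivAt_iff_tendsto_slope]
  have δlim : Tendsto (fun y : ℝ => |y - x| / 2) (nhdsWithin x {x}ᶜ) (nhdsWithin 0 (Ioi 0)) := by
    rw [tendsto_nhdsWithin_iff]
    constructor
    · have : Tendsto (fun y : ℝ => |y - x| / 2) (nhds x) (nhds 0) := by
        have : ContinuousAt (fun y : ℝ => |y - x| / 2) x := by fun_prop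
        simpa using this.tendsto
      exact this.mono_left nhdsWithin_le_nhds
    · filter_upwards [self_mem_nhdsWithin] with y hy
      have : y - x ≠ 0 := sub_ne_zero.2 hy
      have h2 : 0 < |y - x| := abs_pos.2 this
      exact Set.mem_Ioi.2 (by linarith)
  have xmem : ∀ᶠ y : ℝ in nhdsWithin x {x}ᶜ,
      x ∈ Metric.closedBall ((x + y) / 2) (1 * (|y - x| / 2)) := by
    filter_upwards with y
    rw [Metric.mem_closedBall, Real.dist_eq]
    have : |x - (x + y) / 2| = |y - x| / 2 := by
      rw [show x - (x + y) / 2 = -((y - x) / 2) by ring, abs_neg, abs_div, abs_two]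
    rw [this]
    linarith [abs_nonneg (y - x)]
  have key := hx (fun y : ℝ => (x + y) / 2) (fun y : ℝ => |y - x| / 2) δlim xmem
  apply key.congr'
  filter_upwards [self_mem_nhdsWithin] with y hy
  have hy' : y ≠ x := hy
  have hFsub : (∫ t in a..y, m t) - ∫ t in a..x, m t = ∫ t in x..y, m t :=
    intervalIntegral.integral_interval_sub_left hm.intervalIntegrable hm.intervalIntegrable
  rcases lt_or_gt_of_ne hy' with hlt | hgt
  · -- y < x
    have hball : Metric.closedBall ((x + y) / 2) (|y - x| / 2) = Icc y x := by
      rw [Real.closedBall_eq_Icc, abs_sub_comm, abs_of_pos (by linarith : (0:ℝ) < x - y)]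
      congr 1 <;> ring
    rw [hball, setAverage_eq, measureReal_def, Real.volume_Icc, slope_def_field, hFsub,
      intervalIntegral.integral_symm, intervalIntegral.integral_of_le hlt.le,
      ← integral_Icc_eq_integral_Ioc, ENNReal.toReal_ofReal (by linarith)]
    rw [smul_eq_mul]
    rw [div_eq_mul_inv, show (y - x)⁻¹ = -((x - y)⁻¹) by rw [← inv_neg]; congr 1; ring]
    ring
  · -- x < y
    have hball : Metric.closedBall ((x + y) / 2) (|y - x| / 2) = Icc x y := by
      rw [Real.closedBall_eq_Icc, abs_of_pos (by linarith : (0:ℝ) < y - x)]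
      congr 1 <;> ring
    rw [hball, setAverage_eq, measureReal_def, Real.volume_Icc, slope_def_field, hFsub,
      intervalIntegral.integral_of_le hgt.le, ← integral_Icc_eq_integral_Ioc,
      ENNReal.toReal_ofReal (by linarith)]
    rw [smul_eq_mul]
    field_simp

/-- Properties of the weight
`w(x) = 2 exp(-(k/2h)∫m) sinh((k/h)∫_a^x m)`: `|w| ≤ 1` and
`w'(x) ≥ (2k/h) exp(-(k/2h)∫m) m(x)` a.e. -/
theorem stmt_9 (m : ℝ → ℝ) (hm : Integrable m volume) (hm0 : ∀ x, 0 ≤ m x)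
    (k h : ℝ) (hk : 0 < k) (hh : 0 < h) (a : ℝ)
    (ha : (∫ x in Set.Ioi a, m x) = ∫ x in Set.Iio a, m x)
    (w : ℝ → ℝ)
    (hw : ∀ x, w x = 2 * Real.exp (-(k / (2 * h)) * ∫ y, m y) *
        Real.sinh (k / h * ∫ t in a..x, m t)) :
    (∀ x, |w x| ≤ 1) ∧
    (∀ᵐ x ∂volume,
      2 * k / h * Real.exp (-(k / (2 * h)) * ∫ y, m y) * m x ≤ deriv w x) := by
  set I : ℝ := ∫ y, m y with hI
  set F : ℝ → ℝ := fun x => ∫ t in a..x, m t with hF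
  -- split the total integral
  have hsplit : I = (∫ x in Set.Iio a, m x) + ∫ x in Set.Ioi a, m x := by
    rw [hI, ← intervalIntegral.integral_Iic_add_Ioi hm.integrableOn hm.integrableOn,
      integral_Iic_eq_integral_Iio]
  have hIoi : (∫ x in Set.Ioi a, m x) = I / 2 := by rw [hsplit, ha]; ring
  have hIio : (∫ x in Set.Iio a, m x) = I / 2 := by rw [← ha, hIoi]
  have hInn : 0 ≤ I := integral_nonneg hm0
  -- bound |F x| ≤ I / 2
  have hFbound : ∀ x, |F x| ≤ I / 2 := by
    intro x
    rcases le_or_gt a x with hax | hax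
    · have h1 : F x = ∫ t in Set.Ioc a x, m t := intervalIntegral.integral_of_le hax
      have h2 : (0:ℝ) ≤ F x := by
        rw [h1]; exact setIntegral_nonneg measurableSet_Ioc fun t _ => hm0 t
      have h3 : F x ≤ ∫ t in Set.Ioi a, m t := by
        rw [h1]
        exact setIntegral_mono_set hm.integrableOn (Eventually.of_forall hm0)
          (HasSubset.Subset.eventuallyLE Set.Ioc_subset_Ioi_self)
      rw [abs_of_nonneg h2]; linarith [hIoi ▸ h3]
    · have h1 : F x = -∫ t in Set.Ioc x a, m t := by
        rw [show F x = ∫ t in a..x, m t from rfl, intervalIntegral.integral_symm,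
          intervalIntegral.integral_of_le hax.le]
      have h2 : (0:ℝ) ≤ ∫ t in Set.Ioc x a, m t :=
        setIntegral_nonneg measurableSet_Ioc fun t _ => hm0 t
      have h3 : (∫ t in Set.Ioc x a, m t) ≤ ∫ t in Set.Iic a, m t :=
        setIntegral_mono_set hm.integrableOn (Eventually.of_forall hm0)
          (HasSubset.Subset.eventuallyLE Set.Ioc_subset_Iic_self)
      rw [integral_Iic_eq_integral_Iio, hIio] at h3
      rw [h1, abs_neg, abs_of_nonneg h2]; linarith
  set c : ℝ := k / (2 * h) * I with hc
  have hcnn : 0 ≤ c := by positivity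
  constructor
  · intro x
    rw [hw x]
    have h1 : |Real.sinh (k / h * F x)| = Real.sinh |k / h * F x| := by
      rcases le_or_gt 0 (k / h * F x) with hu | hu
      · rw [abs_of_nonneg hu, abs_of_nonneg (Real.sinh_nonneg_iff.2 hu)]
      · rw [abs_of_neg hu, abs_of_neg (Real.sinh_neg_iff.2 hu), ← Real.sinh_neg]
    have h2 : |k / h * F x| ≤ c := by
      rw [abs_mul, abs_of_pos (by positivity : (0:ℝ) < k / h), hc]
      calc k / h * |F x| ≤ k / h * (I / 2) := by
            apply mul_le_mul_of_nonneg_left (hFbound x) (by positivity)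
        _ = k / (2 * h) * I := by ring
    have h3 : Real.sinh |k / h * F x| ≤ Real.sinh c := Real.sinh_le_sinh.2 h2
    have hE : Real.exp (-(k / (2 * h)) * I) = Real.exp (-c) := by rw [hc]; ring_nf
    rw [abs_mul, abs_mul]
    have h2abs : |(2:ℝ)| = 2 := by norm_num
    rw [h2abs, abs_of_pos (Real.exp_pos _), hE, h1]
    have hfinal : 2 * Real.exp (-c) * Real.sinh c ≤ 1 := by
      rw [Real.sinh_eq]
      have e1 : Real.exp (-c) * Real.exp c = 1 := by
        rw [← Real.exp_add]; simp
      nlinarith [Real.exp_pos (-c), sq_nonneg (Real.exp (-c))]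
    calc 2 * Real.exp (-c) * Real.sinh |k / h * F x|
        ≤ 2 * Real.exp (-c) * Real.sinh c := by
          apply mul_le_mul_of_nonneg_left h3 (by positivity)
      _ ≤ 1 := hfinal
  · filter_upwards [aux_ae_hasDerivAt_intervalIntegral m hm a] with x hx
    have hwfun : w = fun y => 2 * Real.exp (-(k / (2 * h)) * I) *
        Real.sinh (k / h * F y) := funext hw
    have hd1 : HasDerivAt (fun y => k / h * F y) (k / h * m x) x := hx.const_mul _
    have hd2 : HasDerivAt (fun y => Real.sinh (k / h * F y))
        (Real.cosh (k / h * F x) * (k / h * m x)) x := hd1.sinh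
    have hd3 : HasDerivAt w
        (2 * Real.exp (-(k / (2 * h)) * I) * (Real.cosh (k / h * F x) * (k / h * m x))) x := by
      rw [hwfun]; exact hd2.const_mul _
    rw [hd3.deriv]
    have hcosh := Real.one_le_cosh (k / h * F x)
    have hE := Real.exp_pos (-(k / (2 * h)) * I)
    have hmx := hm0 x
    have hkh : 0 < k / h := by positivity
    have hrw : 2 * k / h = 2 * (k / h) := by ring
    rw [hrw]
    nlinarith [mul_nonneg (mul_nonneg hE.le (mul_nonneg hkh.le hmx)) (sub_nonneg.2 hcosh)]
end
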